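/- Suppose C^∞ ∩ A⁻¹(D^∞) = {0}. Let r_C = 2 if C is convex and r_C = 1 otherwise, and let L > ‖A‖²/r_C. Let x⁰ ∈ C and let {x^t} be any sequence such that for every t ≥ 0 there exists η^t ∈ Proj_D(Ax^t) with x^{t+1} ∈ Proj_C(x^t − Aᵀ(Ax^t − η^t)/L) (the fixed-stepsize algorithm SpFeas_DC). Then the sequence {x^t} is bounded. -/

import Mathlib

open Filter Topology Metric
open scoped RealInnerProductSpace

noncomputable section

/-- The set of projections of `y` onto `S`. -/
def projSet {E : Type*} [NormedAddCommGroup E] (S : Set E) (y : E) : Set E :=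
  {z | z ∈ S ∧ dist y z = Metric.infDist y S}

/-- The horizon cone of `S`. -/
def horizonCone {E : Type*} [NormedAddCommGroup E] [NormedSpace ℝ E] (S : Set E) : Set E :=
  {x | ∃ (u : ℕ → E) (β : ℕ → ℝ), (∀ t, u t ∈ S) ∧ (∀ t, 0 < β t) ∧
    Tendsto β atTop (𝓝 (0 : ℝ)) ∧ Tendsto (fun t => β t • u t) atTop (𝓝 x)}

/-- The regular (Fréchet) normal cone to `S` at `x`. -/
def regNormalCone {E : Type*} [NormedAddCommGroup E] [InnerProductSpace ℝ E]
    (S : Set E) (x : E) : Set E :=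
  {v | x ∈ S ∧ ∀ ε > 0, ∃ δ > 0, ∀ u ∈ S, ‖u - x‖ < δ → ⟪v, u - x⟫ ≤ ε * ‖u - x‖}

/-- The limiting normal cone to `S` at `x`. -/
def normalCone {E : Type*} [NormedAddCommGroup E] [InnerProductSpace ℝ E]
    (S : Set E) (x : E) : Set E :=
  {v | x ∈ S ∧ ∃ (xs vs : ℕ → E), (∀ t, vs t ∈ regNormalCone S (xs t)) ∧
    Tendsto xs atTop (𝓝 x) ∧ Tendsto vs atTop (𝓝 v)}

/-- The regular (Fréchet) subdifferential at `x` of the function `φ + δ_C`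
(the real-valued function `φ` plus the indicator of `C`). -/
def regSubdiff {E : Type*} [NormedAddCommGroup E] [InnerProductSpace ℝ E]
    (φ : E → ℝ) (C : Set E) (x : E) : Set E :=
  {v | x ∈ C ∧ ∀ ε > 0, ∃ δ > 0, ∀ u ∈ C, ‖u - x‖ < δ →
      φ u - φ x - ⟪v, u - x⟫ ≥ -(ε * ‖u - x‖)}

/-- The limiting subdifferential at `x` of the function `φ + δ_C`. -/
def limSubdiff {E : Type*} [NormedAddCommGroup E] [InnerProductSpace ℝ E]
    (φ : E → ℝ) (C : Set E) (x : E) : Set E :=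
  {v | x ∈ C ∧ ∃ (xs vs : ℕ → E), (∀ t, vs t ∈ regSubdiff φ C (xs t)) ∧
    Tendsto xs atTop (𝓝 x) ∧ Tendsto (fun t => φ (xs t)) atTop (𝓝 (φ x)) ∧
    Tendsto vs atTop (𝓝 v)}

/-- The smooth part `x ↦ ½ d(Ax, D)²` of the split-feasibility objective
`F = ½ d(A·, D)² + δ_C`. -/
def phiF {n m : ℕ} (A : EuclideanSpace ℝ (Fin n) →L[ℝ] EuclideanSpace ℝ (Fin m))
    (D : Set (EuclideanSpace ℝ (Fin m))) (x : EuclideanSpace ℝ (Fin n)) : ℝ :=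
  Metric.infDist (A x) D ^ 2 / 2

/-- A polyhedral set: an intersection of finitely many closed half-spaces. -/
def IsPolyhedral {E : Type*} [NormedAddCommGroup E] [InnerProductSpace ℝ E] (S : Set E) : Prop :=
  ∃ (k : ℕ) (a : Fin k → E) (b : Fin k → ℝ), S = {x | ∀ i, ⟪a i, x⟫ ≤ b i}

end

set_option maxHeartbeats 1000000 in
lemma descent_aux {n m : ℕ}
    (A : EuclideanSpace ℝ (Fin n) →L[ℝ] EuclideanSpace ℝ (Fin m))
    (C : Set (EuclideanSpace ℝ (Fin n))) (D : Set (EuclideanSpace ℝ (Fin m)))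
    (rC L : ℝ) (hrC : (Convex ℝ C ∧ rC = 2) ∨ (¬ Convex ℝ C ∧ rC = 1))
    (hL : ‖A‖ ^ 2 / rC < L)
    (xt xt1 : EuclideanSpace ℝ (Fin n)) (hxt : xt ∈ C)
    (η : EuclideanSpace ℝ (Fin m)) (hη : η ∈ projSet D (A xt))
    (hproj : xt1 ∈ projSet C (xt - L⁻¹ • ((ContinuousLinearMap.adjoint A) (A xt - η)))) :
    Metric.infDist (A xt1) D ≤ Metric.infDist (A xt) D := by
  have hrCpos : 0 < rC := by rcases hrC with ⟨_, h⟩ | ⟨_, h⟩ <;> rw [h] <;> norm_num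
  have hL0 : 0 < L := lt_of_le_of_lt (by positivity) hL
  have hALrC : ‖A‖ ^ 2 < rC * L := by
    rw [div_lt_iff₀ hrCpos] at hL; linarith [hL]
  set g := (ContinuousLinearMap.adjoint A) (A xt - η) with hg
  set Δ := xt1 - xt with hΔ
  set y := xt - L⁻¹ • g with hy
  have hxt1C : xt1 ∈ C := hproj.1
  -- key inner product bound: 2 * ⟪g, Δ⟫ ≤ -(rC * L) * ‖Δ‖^2
  have hkey : 2 * ⟪g, Δ⟫ ≤ -(rC * L) * ‖Δ‖ ^ 2 := by
    rcases hrC with ⟨hconv, hrc2⟩ | ⟨_, hrc1⟩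
    · -- convex case: ⟪y - xt1, xt - xt1⟫ ≤ 0
      have hCne' : C.Nonempty := ⟨xt, hxt⟩
      have heq : ‖y - xt1‖ = ⨅ w : C, ‖y - w‖ := by
        rw [← dist_eq_norm, hproj.2, Metric.infDist_eq_iInf]
        simp_rw [dist_eq_norm]
      have := (norm_eq_iInf_iff_real_inner_le_zero hconv hxt1C).mp heq xt hxt
      have h1 : y - xt1 = -Δ - L⁻¹ • g := by rw [hy, hΔ]; abel
      have h2 : xt - xt1 = -Δ := by rw [hΔ]; abel
      rw [h1, h2, inner_sub_left, inner_neg_neg, inner_neg_right, real_inner_smul_left,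
        real_inner_self_eq_norm_sq] at this
      have : L⁻¹ * ⟪g, Δ⟫ ≤ -‖Δ‖ ^ 2 := by linarith
      have := mul_le_mul_of_nonneg_left this (le_of_lt hL0)
      rw [← mul_assoc, mul_inv_cancel₀ (ne_of_gt hL0), one_mul] at this
      rw [hrc2]; nlinarith
    · -- general case: from dist y xt1 ≤ dist y xt
      have hle : dist y xt1 ≤ dist y xt := by
        rw [hproj.2]; exact Metric.infDist_le_dist_of_mem hxt
      rw [dist_eq_norm, dist_eq_norm] at hle
      have h1 : y - xt1 = -(Δ + L⁻¹ • g) := by rw [hy, hΔ]; abel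
      have h2 : y - xt = -(L⁻¹ • g) := by rw [hy]; abel
      rw [h1, h2, norm_neg, norm_neg] at hle
      have hsq : ‖Δ + L⁻¹ • g‖ ^ 2 ≤ ‖L⁻¹ • g‖ ^ 2 :=
        pow_le_pow_left₀ (norm_nonneg _) hle 2
      rw [norm_add_sq_real, real_inner_smul_right] at hsq
      have h3 : ‖Δ‖ ^ 2 + 2 * (L⁻¹ * ⟪Δ, g⟫) ≤ 0 := by linarith
      have hcomm : ⟪g, Δ⟫ = ⟪Δ, g⟫ := real_inner_comm Δ g
      have h4 := mul_le_mul_of_nonneg_left h3 (le_of_lt hL0)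
      have hLinv : L * L⁻¹ = 1 := mul_inv_cancel₀ (ne_of_gt hL0)
      have h5 : L * ‖Δ‖ ^ 2 + 2 * ⟪Δ, g⟫ ≤ 0 := by
        calc L * ‖Δ‖ ^ 2 + 2 * ⟪Δ, g⟫
            = L * ‖Δ‖ ^ 2 + 2 * ((L * L⁻¹) * ⟪Δ, g⟫) := by rw [hLinv]; ring
          _ = L * (‖Δ‖ ^ 2 + 2 * (L⁻¹ * ⟪Δ, g⟫)) := by ring
          _ ≤ L * 0 := h4
          _ = 0 := by ring
      rw [hrc1]
      linarith [h5, hcomm]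
  -- now the function value inequality
  have hηD : η ∈ D := hη.1
  have hfx : ‖A xt - η‖ = Metric.infDist (A xt) D := by
    rw [← dist_eq_norm]; exact hη.2
  have hA1 : Metric.infDist (A xt1) D ≤ ‖A xt1 - η‖ := by
    rw [← dist_eq_norm]; exact Metric.infDist_le_dist_of_mem hηD
  have hsplit : A xt1 - η = (A xt - η) + A Δ := by
    rw [hΔ, map_sub]; abel
  have hinner : ⟪A xt - η, A Δ⟫ = ⟪g, Δ⟫ := by
    rw [hg, ContinuousLinearMap.adjoint_inner_left]
  have hAn : ‖A Δ‖ ^ 2 ≤ ‖A‖ ^ 2 * ‖Δ‖ ^ 2 := by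
    have := A.le_opNorm Δ
    nlinarith [norm_nonneg (A Δ), norm_nonneg Δ, norm_nonneg A]
  have hsq : ‖A xt1 - η‖ ^ 2 ≤ Metric.infDist (A xt) D ^ 2 := by
    rw [hsplit, norm_add_sq_real, hinner, hfx]
    nlinarith [hkey, hAn, hALrC, sq_nonneg ‖Δ‖]
  have h0 : (0:ℝ) ≤ Metric.infDist (A xt) D := Metric.infDist_nonneg
  nlinarith [hA1, Metric.infDist_nonneg (x := A xt1) (s := D), norm_nonneg (A xt1 - η)]

lemma coercive_aux {n m : ℕ}
    (A : EuclideanSpace ℝ (Fin n) →L[ℝ] EuclideanSpace ℝ (Fin m))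
    (C : Set (EuclideanSpace ℝ (Fin n))) (D : Set (EuclideanSpace ℝ (Fin m)))
    (hDne : D.Nonempty) (hDcl : IsClosed D)
    (hhor : ∀ z, z ∈ horizonCone C → A z ∈ horizonCone D → z = 0)
    (c : ℝ) :
    Bornology.IsBounded {z | z ∈ C ∧ Metric.infDist (A z) D ≤ c} := by
  by_contra hub
  rw [isBounded_iff_forall_norm_le] at hub
  push_neg at hub
  have hz : ∀ k : ℕ, ∃ z, (z ∈ C ∧ Metric.infDist (A z) D ≤ c) ∧ (k : ℝ) < ‖z‖ := by
    intro k; obtain ⟨z, hz1, hz2⟩ := hub k; exact ⟨z, hz1, hz2⟩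
  choose z hzS hzn using hz
  set z' : ℕ → EuclideanSpace ℝ (Fin n) := fun k => z (k + 1) with hz'
  have hzpos : ∀ k, (0:ℝ) < ‖z' k‖ := by
    intro k
    have h := hzn (k + 1)
    have h0 : (0:ℝ) ≤ ((k + 1 : ℕ) : ℝ) := Nat.cast_nonneg _
    simpa [hz'] using lt_of_le_of_lt h0 h
  set β : ℕ → ℝ := fun k => ‖z' k‖⁻¹ with hβ
  have hβpos : ∀ k, 0 < β k := fun k => inv_pos.mpr (hzpos k)
  have hβlt : ∀ k, β k ≤ ((k:ℝ) + 1)⁻¹ := by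
    intro k
    have h1 : (0:ℝ) < (k:ℝ) + 1 := by positivity
    exact inv_anti₀ h1 (le_of_lt (by simpa [hz'] using hzn (k + 1)))
  have hβ0 : Tendsto β atTop (𝓝 0) := by
    apply squeeze_zero (fun k => le_of_lt (hβpos k)) hβlt
    exact tendsto_one_div_add_atTop_nhds_zero_nat.congr (by intro k; rw [one_div])
  -- unit sphere subsequence
  have hunit : ∀ k, β k • z' k ∈ Metric.sphere (0 : EuclideanSpace ℝ (Fin n)) 1 := by
    intro k
    simp only [mem_sphere_iff_norm, sub_zero, norm_smul, hβ, Real.norm_eq_abs,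
      abs_of_pos (hβpos k)]
    rw [abs_of_pos (inv_pos.mpr (hzpos k))]
    exact inv_mul_cancel₀ (ne_of_gt (hzpos k))
  obtain ⟨w, hw, φ, hφmono, hφtend⟩ :=
    (isCompact_sphere (0 : EuclideanSpace ℝ (Fin n)) 1).tendsto_subseq hunit
  have hwnorm : ‖w‖ = 1 := by simpa [mem_sphere_iff_norm] using hw
  have hβφ0 : Tendsto (β ∘ φ) atTop (𝓝 0) := hβ0.comp hφmono.tendsto_atTop
  have hwC : w ∈ horizonCone C := by
    exact ⟨fun k => z' (φ k), fun k => β (φ k), fun k => (hzS (φ k + 1)).1,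
      fun k => hβpos (φ k), hβφ0, hφtend⟩
  have hAw : A w ∈ horizonCone D := by
    -- choose projections
    have hd : ∀ k, ∃ d ∈ D, Metric.infDist (A (z' k)) D = dist (A (z' k)) d :=
      fun k => hDcl.exists_infDist_eq_dist hDne (A (z' k))
    choose d hdD hdd using hd
    refine ⟨fun k => d (φ k), fun k => β (φ k), fun k => hdD (φ k),
      fun k => hβpos (φ k), hβφ0, ?_⟩
    have hAtend : Tendsto (fun k => A (β (φ k) • z' (φ k))) atTop (𝓝 (A w)) :=
      (A.continuous.tendsto w).comp hφtend
    have hAtend' : Tendsto (fun k => β (φ k) • A (z' (φ k))) atTop (𝓝 (A w)) := by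
      simpa [map_smul] using hAtend
    have hdiff : Tendsto (fun k => β (φ k) • (A (z' (φ k)) - d (φ k))) atTop
        (𝓝 (0 : EuclideanSpace ℝ (Fin m))) := by
      apply squeeze_zero_norm (a := fun k => β (φ k) * c)
      · intro k
        rw [norm_smul, Real.norm_eq_abs, abs_of_pos (hβpos (φ k))]
        apply mul_le_mul_of_nonneg_left _ (le_of_lt (hβpos (φ k)))
        rw [← dist_eq_norm, ← hdd (φ k)]
        exact (hzS (φ k + 1)).2
      · simpa using hβφ0.mul_const c
    have : Tendsto (fun k => β (φ k) • A (z' (φ k)) - β (φ k) • (A (z' (φ k)) - d (φ k)))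
        atTop (𝓝 (A w - 0)) := hAtend'.sub hdiff
    simpa [smul_sub] using this
  have := hhor w hwC hAw
  rw [this, norm_zero] at hwnorm
  exact one_ne_zero hwnorm.symm

/-- Under the horizon-cone condition `C^∞ ∩ A⁻¹(D^∞) = {0}`, the sequence
generated by the fixed-stepsize algorithm `SpFeas_DC` is bounded. -/
theorem stmt_7 (n m : ℕ)
    (A : EuclideanSpace ℝ (Fin n) →L[ℝ] EuclideanSpace ℝ (Fin m))
    (C : Set (EuclideanSpace ℝ (Fin n))) (D : Set (EuclideanSpace ℝ (Fin m)))
    (hCne : C.Nonempty) (hCcl : IsClosed C) (hDne : D.Nonempty) (hDcl : IsClosed D)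
    (hhor : ∀ z, z ∈ horizonCone C → A z ∈ horizonCone D → z = 0)
    (rC L : ℝ) (hrC : (Convex ℝ C ∧ rC = 2) ∨ (¬ Convex ℝ C ∧ rC = 1))
    (hL : ‖A‖ ^ 2 / rC < L)
    (x : ℕ → EuclideanSpace ℝ (Fin n)) (hx0 : x 0 ∈ C)
    (hstep : ∀ t : ℕ, ∃ η ∈ projSet D (A (x t)),
      x (t + 1) ∈ projSet C (x t - L⁻¹ • ((ContinuousLinearMap.adjoint A) (A (x t) - η)))) :
    Bornology.IsBounded (Set.range x) := by
  set c := Metric.infDist (A (x 0)) D with hc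
  have hmem : ∀ t, x t ∈ C ∧ Metric.infDist (A (x t)) D ≤ c := by
    intro t
    induction t with
    | zero => exact ⟨hx0, le_refl _⟩
    | succ t ih =>
      obtain ⟨η, hη, hproj⟩ := hstep t
      exact ⟨hproj.1,
        le_trans (descent_aux A C D rC L hrC hL (x t) (x (t + 1)) ih.1 η hη hproj) ih.2⟩
  have hsub : Set.range x ⊆ {z | z ∈ C ∧ Metric.infDist (A z) D ≤ c} := by
    rintro _ ⟨t, rfl⟩; exact hmem t
  exact (coercive_aux A C D hDne hDcl hhor c).subset hsub
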